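/- Let ρ : I → ℝ be a differentiable positive function on an interval I, and let ψ, ψ_h : I → ℝ with sin ψ ≠ 0, sin ψ_h ≠ 0, such that ρ'(θ) = ρ(θ)·(cot ψ_h(θ) - cot ψ(θ)) and ψ(θ) = ψ_h(θ) - φ(θ). Suppose 0 < ρ ≤ 1, |tan φ(θ)| ≤ ε with ε·Q < 1, and |cot ψ(θ)| ≤ Q. Then |ρ'(θ)| ≤ ε·(1 + Q²)·√(1 + ε²)/(1 - ε·Q). -/

import Mathlib

open Real

set_option maxHeartbeats 1000000 in
theorem stmt_8 (I : Set ℝ) (ρ ρ' ψ ψh φ : ℝ → ℝ) (ε Q : ℝ)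
    (hε : 0 ≤ ε) (hQ : 0 ≤ Q) (hεQ : ε * Q < 1)
    (hderiv : ∀ θ ∈ I, HasDerivAt ρ (ρ' θ) θ)
    (heq : ∀ θ ∈ I, ρ' θ = ρ θ *
      (Real.cos (ψh θ) / Real.sin (ψh θ) - Real.cos (ψ θ) / Real.sin (ψ θ)))
    (hψ : ∀ θ ∈ I, ψ θ = ψh θ - φ θ)
    (hsin : ∀ θ ∈ I, Real.sin (ψ θ) ≠ 0)
    (hsinh : ∀ θ ∈ I, Real.sin (ψh θ) ≠ 0)
    (hcos : ∀ θ ∈ I, Real.cos (φ θ) ≠ 0)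
    (hρpos : ∀ θ ∈ I, 0 < ρ θ) (hρ1 : ∀ θ ∈ I, ρ θ ≤ 1)
    (htan : ∀ θ ∈ I, |Real.tan (φ θ)| ≤ ε)
    (hcot : ∀ θ ∈ I, |Real.cos (ψ θ) / Real.sin (ψ θ)| ≤ Q) :
    ∀ θ ∈ I, |ρ' θ| ≤ ε * (1 + Q^2) * Real.sqrt (1 + ε^2) / (1 - ε * Q) := by
  intro θ hθ
  have hψhθ : ψh θ = ψ θ + φ θ := by have := hψ θ hθ; linarith
  set s := Real.sin (ψ θ) with hsdef
  set c := Real.cos (ψ θ) with hcdef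
  have hsne : s ≠ 0 := hsin θ hθ
  have hshne : Real.sin (ψh θ) ≠ 0 := hsinh θ hθ
  have hcφ : Real.cos (φ θ) ≠ 0 := hcos θ hθ
  have hsc : s ^ 2 + c ^ 2 = 1 := Real.sin_sq_add_cos_sq (ψ θ)
  set k := c / s with hk
  set t := Real.tan (φ θ) with ht
  have hkQ : |k| ≤ Q := hcot θ hθ
  have htε : |t| ≤ ε := htan θ hθ
  have hd : 0 < 1 - ε * Q := by linarith
  have hsh : Real.sin (ψh θ) = s * Real.cos (φ θ) + c * Real.sin (φ θ) := by
    rw [hψhθ, Real.sin_add]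
  have hch : Real.cos (ψh θ) = c * Real.cos (φ θ) - s * Real.sin (φ θ) := by
    rw [hψhθ, Real.cos_add]
  have hsh2 : s * Real.cos (φ θ) + c * Real.sin (φ θ) ≠ 0 := hsh ▸ hshne
  have key : ρ' θ = -(ρ θ * Real.sin (φ θ)) / (Real.sin (ψh θ) * s) := by
    rw [heq θ hθ, hch, hsh]
    rw [div_sub_div _ _ hsh2 hsne, mul_div_assoc', div_eq_div_iff (mul_ne_zero hsh2 hsne) (mul_ne_zero hsh2 hsne)]
    linear_combination (-(ρ θ * Real.sin (φ θ))) * (s * Real.cos (φ θ) + c * Real.sin (φ θ)) * s * hsc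
  have hden : Real.sin (ψh θ) * s = s ^ 2 * Real.cos (φ θ) * (1 + k * t) := by
    rw [hsh, hk, ht, Real.tan_eq_sin_div_cos]
    field_simp
  have hktabs : |k * t| ≤ ε * Q := by
    rw [abs_mul]
    calc |k| * |t| ≤ Q * ε := mul_le_mul hkQ htε (abs_nonneg _) hQ
    _ = ε * Q := mul_comm _ _
  have h1kt : 1 - ε * Q ≤ |1 + k * t| := by
    calc 1 - ε * Q ≤ 1 - |k * t| := by linarith
    _ = |(1:ℝ)| - |-(k * t)| := by simp
    _ ≤ |1 - -(k * t)| := abs_sub_abs_le_abs_sub _ _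
    _ = |1 + k * t| := by ring_nf
  have hs2pos : 0 < s ^ 2 := by positivity
  have hcφpos : 0 < |Real.cos (φ θ)| := abs_pos.mpr hcφ
  have hktpos : 0 < |1 + k * t| := by linarith
  have habs : |ρ' θ| = ρ θ * |Real.sin (φ θ)| / (s ^ 2 * |Real.cos (φ θ)| * |1 + k * t|) := by
    rw [key, hden, abs_div, abs_neg, abs_mul, abs_mul, abs_mul, abs_of_pos (hρpos θ hθ),
      abs_pow, sq_abs]
  have hsinφ : |Real.sin (φ θ)| = |t| * |Real.cos (φ θ)| := by
    rw [ht, Real.tan_eq_sin_div_cos, abs_div]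
    field_simp
  have hs2k : s ^ 2 * (1 + k ^ 2) = 1 := by
    rw [hk]
    field_simp
    linarith [hsc]
  have hk2 : k ^ 2 ≤ Q ^ 2 := by
    have := sq_abs k
    nlinarith [abs_nonneg k]
  have step1 : |ρ' θ| ≤ ρ θ * |Real.sin (φ θ)| / (s ^ 2 * |Real.cos (φ θ)| * (1 - ε * Q)) := by
    rw [habs]
    exact div_le_div_of_nonneg_left (mul_nonneg (hρpos θ hθ).le (abs_nonneg _)) (by positivity)
      (mul_le_mul_of_nonneg_left h1kt (by positivity))
  have step2 : ρ θ * |Real.sin (φ θ)| / (s ^ 2 * |Real.cos (φ θ)| * (1 - ε * Q))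
      ≤ ε * (1 + Q ^ 2) / (1 - ε * Q) := by
    have hρt : ρ θ * |t| ≤ ε := by nlinarith [hρpos θ hθ, hρ1 θ hθ, abs_nonneg t]
    have hεs : ε ≤ ε * (1 + Q ^ 2) * s ^ 2 := by
      have h1 := mul_nonneg (mul_nonneg hε hs2pos.le) (sub_nonneg.mpr hk2)
      have h2 : ε * (s ^ 2 * (1 + k ^ 2)) = ε := by rw [hs2k, mul_one]
      nlinarith [h1, h2]
    have hfin : ρ θ * |t| ≤ ε * (1 + Q ^ 2) * s ^ 2 := le_trans hρt hεs
    rw [div_le_div_iff₀ (mul_pos (mul_pos hs2pos hcφpos) hd) hd, hsinφ]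
    calc ρ θ * (|t| * |Real.cos (φ θ)|) * (1 - ε * Q)
        = (ρ θ * |t|) * (|Real.cos (φ θ)| * (1 - ε * Q)) := by ring
      _ ≤ (ε * (1 + Q ^ 2) * s ^ 2) * (|Real.cos (φ θ)| * (1 - ε * Q)) :=
          mul_le_mul_of_nonneg_right hfin (mul_nonneg hcφpos.le hd.le)
      _ = ε * (1 + Q ^ 2) * (s ^ 2 * |Real.cos (φ θ)| * (1 - ε * Q)) := by ring
  have step3 : ε * (1 + Q ^ 2) / (1 - ε * Q)
      ≤ ε * (1 + Q ^ 2) * Real.sqrt (1 + ε ^ 2) / (1 - ε * Q) := by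
    have hsqrt : 1 ≤ Real.sqrt (1 + ε ^ 2) := by
      nlinarith [Real.sq_sqrt (show (0:ℝ) ≤ 1 + ε ^ 2 by positivity),
        Real.sqrt_nonneg (1 + ε ^ 2)]
    have hnum : ε * (1 + Q ^ 2) ≤ ε * (1 + Q ^ 2) * Real.sqrt (1 + ε ^ 2) :=
      le_mul_of_one_le_right (by positivity) hsqrt
    gcongr
  linarith
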